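/- (Theorem 2.) Let g₁,…,g_m ∈ ℝ[x₁,…,xₙ] be nonzero polynomials with deg(g_i) ≤ 2d, let K = {x ∈ ℝⁿ : g₁(x) ≥ 0, …, g_m(x) ≥ 0} have nonempty interior, and let f ∈ ℝ[x₁,…,xₙ] with deg(f) ≤ 2d. If ε > ‖vec(f − θ_d)‖ where θ_d = Σ_{α ∈ ℕⁿ_d} x^{2α}, then: (i) the moment relaxation — minimize ⟨f,y⟩ + ε‖y‖ over tms y of degree 2d with y₀ = 1, M_d[y] ⪰ 0 and L_{g_i}^{(d)}[y] ⪰ 0 for all i — attains its infimum at some feasible y*; (ii) the dual SOS program — maximize γ over γ ∈ ℝ and p ∈ ℝ[x]_{2d} subject to ‖vec(p)‖ ≤ ε and f − p − γ ∈ Q(g)_{2d} — attains its supremum; and (iii) the two optimal values are equal. -/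

import Mathlib

open MvPolynomial Finset

/-- The set `ℕⁿ_d` of multi-indices `α ∈ ℕⁿ` with `|α| = α₁ + ⋯ + αₙ ≤ d`. -/
abbrev MIdx (n d : ℕ) : Type := {α : Fin n →₀ ℕ // ∑ i, α i ≤ d}

noncomputable instance MIdx.fintype (n d : ℕ) : Fintype (MIdx n d) := by
  have hfin : {f : Fin n → ℕ | ∑ i, f i ≤ d}.Finite := by
    apply (Set.finite_Icc (0 : Fin n → ℕ) (fun _ => d)).subset
    intro f hf
    refine Set.mem_Icc.mpr ⟨fun i => Nat.zero_le _, fun i => ?_⟩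
    exact le_trans (Finset.single_le_sum (fun j _ => Nat.zero_le (f j)) (Finset.mem_univ i)) hf
  have h2 : {α : Fin n →₀ ℕ | ∑ i, α i ≤ d}.Finite :=
    Set.Finite.preimage (Set.injOn_of_injective (DFunLike.coe_injective (F := Fin n →₀ ℕ))) hfin
  exact h2.fintype

/-- The moment matrix `M_d[y]` of a truncated multi-sequence `y` of degree `2d`,
indexed by `α, β ∈ ℕⁿ_d`, with entries `y_{α+β}`. -/
noncomputable def momMat {n : ℕ} (d : ℕ) (y : MIdx n (2 * d) → ℝ) :
    Matrix (MIdx n d) (MIdx n d) ℝ := fun α β =>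
  y ⟨α.1 + β.1, by
    have hα := α.2; have hβ := β.2
    have h : ∑ i, (α.1 + β.1) i = (∑ i, α.1 i) + ∑ i, β.1 i := by
      simp [Finsupp.add_apply, Finset.sum_add_distrib]
    omega⟩

/-- The localizing matrix `L_p^{(d)}[y]` of a polynomial `p` of degree ≤ 2d at a tms `y`
of degree `2d`, indexed by `α, β ∈ ℕⁿ_t` with `t = d - ⌈deg(p)/2⌉`, with entries
`Σ_γ p_γ y_{α+β+γ}`. -/
noncomputable def locMat {n : ℕ} (d : ℕ) (p : MvPolynomial (Fin n) ℝ)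
    (hp : p.totalDegree ≤ 2 * d) (y : MIdx n (2 * d) → ℝ) :
    Matrix (MIdx n (d - (p.totalDegree + 1) / 2))
      (MIdx n (d - (p.totalDegree + 1) / 2)) ℝ := fun α β =>
  ∑ γ ∈ p.support.attach, p.coeff γ.1 *
    y ⟨α.1 + β.1 + γ.1, by
      have hα := α.2; have hβ := β.2
      have hγ : ∑ i, γ.1 i ≤ p.totalDegree := by
        have h1 := MvPolynomial.le_totalDegree γ.2
        have h2 : (γ.1.sum fun _ e => e) = ∑ i, γ.1 i :=
          Finsupp.sum_fintype _ _ (fun _ => rfl)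
        omega
      have h : ∑ i, (α.1 + β.1 + γ.1) i = ((∑ i, α.1 i) + ∑ i, β.1 i) + ∑ i, γ.1 i := by
        simp [Finsupp.add_apply, Finset.sum_add_distrib]
      omega⟩

/-- The Riesz functional `⟨f, y⟩ = Σ_{α ∈ ℕⁿ_{2d}} f_α y_α`. -/
noncomputable def riesz {n : ℕ} (d : ℕ) (f : MvPolynomial (Fin n) ℝ)
    (y : MIdx n (2 * d) → ℝ) : ℝ :=
  ∑ α : MIdx n (2 * d), f.coeff α.1 * y α

/-- The Euclidean norm of a truncated multi-sequence. -/
noncomputable def tmsNorm {n d : ℕ} (y : MIdx n d → ℝ) : ℝ :=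
  Real.sqrt (∑ α, (y α) ^ 2)

/-- The vector of monomials `[x]_d = (x^α)_{α ∈ ℕⁿ_d}` evaluated at `x`. -/
noncomputable def monVec {n : ℕ} (d : ℕ) (x : Fin n → ℝ) : MIdx n d → ℝ :=
  fun α => ∏ i, x i ^ α.1 i

/-- The coefficient vector `vec(p) ∈ ℝ^{ℕⁿ_{2d}}` of a polynomial `p ∈ ℝ[x]_{2d}`. -/
noncomputable def vecPoly {n : ℕ} (d : ℕ) (p : MvPolynomial (Fin n) ℝ) :
    MIdx n (2 * d) → ℝ := fun α => p.coeff α.1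

/-- `σ` is a sum of squares of polynomials of degree at most `k`. -/
def IsSOSDeg {n : ℕ} (k : ℕ) (σ : MvPolynomial (Fin n) ℝ) : Prop :=
  ∃ (r : ℕ) (s : Fin r → MvPolynomial (Fin n) ℝ),
    (∀ j, (s j).totalDegree ≤ k) ∧ σ = ∑ j, (s j) ^ 2

/-- Membership in the truncated quadratic module `Q(g)_{2d}`. -/
def memQ {n m : ℕ} (d : ℕ) (g : Fin m → MvPolynomial (Fin n) ℝ)
    (q : MvPolynomial (Fin n) ℝ) : Prop :=
  ∃ (σ₀ : MvPolynomial (Fin n) ℝ) (σ : Fin m → MvPolynomial (Fin n) ℝ),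
    IsSOSDeg d σ₀ ∧ (∀ i, IsSOSDeg (d - ((g i).totalDegree + 1) / 2) (σ i)) ∧
    q = σ₀ + ∑ i, g i * σ i

section S17
open MvPolynomial Pointwise

variable {n : ℕ}

lemma s17_sum_eq (μ : Fin n →₀ ℕ) : (μ.sum fun _ e => e) = ∑ i, μ i :=
  Finsupp.sum_fintype _ _ (fun _ => rfl)

lemma s17_sum_add (α β : Fin n →₀ ℕ) : ∑ i, (α + β) i = (∑ i, α i) + ∑ i, β i := by
  simp [Finsupp.add_apply, Finset.sum_add_distrib]

lemma s17_coeff_eq_zero {p : MvPolynomial (Fin n) ℝ} {k : ℕ} (hp : p.totalDegree ≤ k)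
    {μ : Fin n →₀ ℕ} (hμ : k < ∑ i, μ i) : p.coeff μ = 0 := by
  by_contra h
  have h1 := MvPolynomial.le_totalDegree (MvPolynomial.mem_support_iff.2 h)
  rw [s17_sum_eq] at h1
  omega

/-- representation of a polynomial of degree ≤ k as a sum of monomials over `MIdx n k` -/
lemma s17_as_sum {k : ℕ} {p : MvPolynomial (Fin n) ℝ} (hp : p.totalDegree ≤ k) :
    p = ∑ α : MIdx n k, MvPolynomial.monomial α.1 (p.coeff α.1) := by
  apply MvPolynomial.ext; intro μ
  rw [MvPolynomial.coeff_sum]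
  simp only [MvPolynomial.coeff_monomial]
  by_cases h : ∑ i, μ i ≤ k
  · rw [Finset.sum_eq_single (⟨μ, h⟩ : MIdx n k)]
    · simp
    · intro b _ hb; rw [if_neg]; intro he; exact hb (Subtype.ext he)
    · simp
  · rw [s17_coeff_eq_zero hp (lt_of_not_ge h)]
    exact (Finset.sum_eq_zero fun α _ => by
      rw [if_neg]; intro he; rw [← he] at h; exact h α.2).symm

lemma s17_coeff_sum_midx {k : ℕ} (v : MIdx n k → ℝ) (α : MIdx n k) :
    (∑ β : MIdx n k, MvPolynomial.monomial β.1 (v β)).coeff α.1 = v α := by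
  rw [MvPolynomial.coeff_sum]
  simp only [MvPolynomial.coeff_monomial]
  rw [Finset.sum_eq_single α]
  · simp
  · intro b _ hb; rw [if_neg]; intro he; exact hb (Subtype.ext he)
  · simp

lemma s17_totalDegree_sum_midx {k : ℕ} (v : MIdx n k → ℝ) :
    (∑ β : MIdx n k, MvPolynomial.monomial β.1 (v β)).totalDegree ≤ k := by
  refine le_trans (MvPolynomial.totalDegree_finset_sum _ _) ?_
  refine Finset.sup_le fun β _ => le_trans (MvPolynomial.totalDegree_monomial_le _ _) ?_
  exact le_trans (le_of_eq (s17_sum_eq β.1)) β.2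

/-- extension of a tms to all of `ℕⁿ`, by zero -/
noncomputable def Yext {d : ℕ} (y : MIdx n (2 * d) → ℝ) (σ : Fin n →₀ ℕ) : ℝ :=
  if h : ∑ i, σ i ≤ 2 * d then y ⟨σ, h⟩ else 0

lemma Yext_eq {d : ℕ} (y : MIdx n (2 * d) → ℝ) {σ : Fin n →₀ ℕ} (h : ∑ i, σ i ≤ 2 * d) :
    Yext y σ = y ⟨σ, h⟩ := dif_pos h

-- linearity of riesz in the polynomial
lemma riesz_add {d : ℕ} (p q : MvPolynomial (Fin n) ℝ) (y : MIdx n (2 * d) → ℝ) :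
    riesz d (p + q) y = riesz d p y + riesz d q y := by
  simp [riesz, MvPolynomial.coeff_add, add_mul, Finset.sum_add_distrib]

lemma riesz_sub {d : ℕ} (p q : MvPolynomial (Fin n) ℝ) (y : MIdx n (2 * d) → ℝ) :
    riesz d (p - q) y = riesz d p y - riesz d q y := by
  simp [riesz, MvPolynomial.coeff_sub, sub_mul, Finset.sum_sub_distrib]

lemma riesz_sum {d : ℕ} {ι : Type*} (s : Finset ι) (p : ι → MvPolynomial (Fin n) ℝ)
    (y : MIdx n (2 * d) → ℝ) :
    riesz d (∑ i ∈ s, p i) y = ∑ i ∈ s, riesz d (p i) y := by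
  classical
  induction s using Finset.induction with
  | empty => simp [riesz]
  | insert _ _ h ih => rw [Finset.sum_insert h, riesz_add, ih, Finset.sum_insert h]

lemma riesz_monomial {d : ℕ} (σ : Fin n →₀ ℕ) (c : ℝ) (y : MIdx n (2 * d) → ℝ) :
    riesz d (MvPolynomial.monomial σ c) y = c * Yext y σ := by
  unfold riesz Yext
  simp only [MvPolynomial.coeff_monomial]
  by_cases h : ∑ i, σ i ≤ 2 * d
  · rw [dif_pos h, Finset.sum_eq_single (⟨σ, h⟩ : MIdx n (2 * d))]
    · simp
    · intro b _ hb
      rw [if_neg (fun he => hb (Subtype.ext he.symm)), zero_mul]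
    · simp
  · rw [dif_neg h, mul_zero]
    exact Finset.sum_eq_zero fun α _ => by
      rw [if_neg (fun he : σ = α.1 => h (he ▸ α.2)), zero_mul]

lemma riesz_C {d : ℕ} (c : ℝ) (y : MIdx n (2 * d) → ℝ) :
    riesz d (MvPolynomial.C c) y = c * y ⟨0, by simp⟩ := by
  rw [← MvPolynomial.monomial_zero', riesz_monomial, Yext_eq y (by simp)]

theorem s17_test : True := trivial
/-- polynomial with prescribed coefficient vector on `MIdx n k` -/
noncomputable def polyAt {n : ℕ} (k : ℕ) (v : MIdx n k → ℝ) : MvPolynomial (Fin n) ℝ :=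
  ∑ α : MIdx n k, MvPolynomial.monomial α.1 (v α)

lemma polyAt_coeff {k : ℕ} (v : MIdx n k → ℝ) (α : MIdx n k) :
    (polyAt k v).coeff α.1 = v α := s17_coeff_sum_midx v α

lemma polyAt_totalDegree {k : ℕ} (v : MIdx n k → ℝ) :
    (polyAt k v).totalDegree ≤ k := s17_totalDegree_sum_midx v

lemma s17_loc_bound {d : ℕ} {p : MvPolynomial (Fin n) ℝ} (hp : p.totalDegree ≤ 2 * d)
    {γ : Fin n →₀ ℕ} (hγ : γ ∈ p.support)
    (α β : MIdx n (d - (p.totalDegree + 1) / 2)) :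
    ∑ i, (α.1 + β.1 + γ) i ≤ 2 * d := by
  have hγ' : ∑ i, γ i ≤ p.totalDegree :=
    le_trans (le_of_eq (s17_sum_eq γ).symm) (MvPolynomial.le_totalDegree hγ)
  have hα := α.2; have hβ := β.2
  rw [s17_sum_add, s17_sum_add]
  omega

lemma momMat_apply {d : ℕ} (y : MIdx n (2 * d) → ℝ) (α β : MIdx n d) :
    momMat d y α β = Yext y (α.1 + β.1) :=
  (Yext_eq y (by rw [s17_sum_add]; have := α.2; have := β.2; omega)).symm

lemma momMat_symm {d : ℕ} (y : MIdx n (2 * d) → ℝ) (α β : MIdx n d) :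
    momMat d y α β = momMat d y β α := by
  rw [momMat_apply, momMat_apply, add_comm]

lemma locMat_apply {d : ℕ} (p : MvPolynomial (Fin n) ℝ) (hp : p.totalDegree ≤ 2 * d)
    (y : MIdx n (2 * d) → ℝ) (α β : MIdx n (d - (p.totalDegree + 1) / 2)) :
    locMat d p hp y α β = ∑ γ ∈ p.support, p.coeff γ * Yext y (α.1 + β.1 + γ) := by
  unfold locMat
  rw [← Finset.sum_attach p.support (fun γ => p.coeff γ * Yext y (α.1 + β.1 + γ))]
  refine Finset.sum_congr rfl fun γ _ => ?_
  congr 1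
  exact (Yext_eq y (s17_loc_bound hp γ.2 α β)).symm

lemma locMat_symm {d : ℕ} (p : MvPolynomial (Fin n) ℝ) (hp : p.totalDegree ≤ 2 * d)
    (y : MIdx n (2 * d) → ℝ) (α β : MIdx n (d - (p.totalDegree + 1) / 2)) :
    locMat d p hp y α β = locMat d p hp y β α := by
  rw [locMat_apply, locMat_apply]
  refine Finset.sum_congr rfl fun γ _ => ?_
  rw [add_comm α.1 β.1]

lemma riesz_g_monomial {d : ℕ} (p : MvPolynomial (Fin n) ℝ) (σ : Fin n →₀ ℕ) (c : ℝ)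
    (y : MIdx n (2 * d) → ℝ) :
    riesz d (p * MvPolynomial.monomial σ c) y
      = c * ∑ γ ∈ p.support, p.coeff γ * Yext y (σ + γ) := by
  conv_lhs => rw [MvPolynomial.as_sum p, Finset.sum_mul]
  rw [riesz_sum, Finset.mul_sum]
  refine Finset.sum_congr rfl fun γ _ => ?_
  rw [MvPolynomial.monomial_mul, riesz_monomial, add_comm γ σ]
  ring

lemma dotProduct_expand {I : Type*} [Fintype I] (M : Matrix I I ℝ) (v w : I → ℝ) :
    dotProduct v (M.mulVec w) = ∑ α, ∑ β, v α * w β * M α β := by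
  unfold dotProduct Matrix.mulVec dotProduct
  refine Finset.sum_congr rfl fun α _ => ?_
  rw [Finset.mul_sum]
  refine Finset.sum_congr rfl fun β _ => ?_
  ring

lemma riesz_mul_eq {d : ℕ} {a b : MvPolynomial (Fin n) ℝ} (ha : a.totalDegree ≤ d)
    (hb : b.totalDegree ≤ d) (y : MIdx n (2 * d) → ℝ) :
    riesz d (a * b) y
      = ∑ α : MIdx n d, ∑ β : MIdx n d, a.coeff α.1 * b.coeff β.1 * momMat d y α β := by
  conv_lhs => rw [s17_as_sum ha, s17_as_sum hb, Finset.sum_mul_sum]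
  rw [riesz_sum]
  refine Finset.sum_congr rfl fun α _ => ?_
  rw [riesz_sum]
  refine Finset.sum_congr rfl fun β _ => ?_
  rw [MvPolynomial.monomial_mul, riesz_monomial, momMat_apply]

lemma riesz_g_mul_eq {d : ℕ} (p : MvPolynomial (Fin n) ℝ) (hp : p.totalDegree ≤ 2 * d)
    {a b : MvPolynomial (Fin n) ℝ}
    (ha : a.totalDegree ≤ d - (p.totalDegree + 1) / 2)
    (hb : b.totalDegree ≤ d - (p.totalDegree + 1) / 2) (y : MIdx n (2 * d) → ℝ) :
    riesz d (p * (a * b)) y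
      = ∑ α, ∑ β, a.coeff α.1 * b.coeff β.1 * locMat d p hp y α β := by
  conv_lhs => rw [s17_as_sum ha, s17_as_sum hb, Finset.sum_mul_sum, Finset.mul_sum]
  rw [riesz_sum]
  refine Finset.sum_congr rfl fun α _ => ?_
  rw [Finset.mul_sum, riesz_sum]
  refine Finset.sum_congr rfl fun β _ => ?_
  rw [MvPolynomial.monomial_mul, riesz_g_monomial, locMat_apply, Finset.mul_sum]

lemma riesz_sq {d : ℕ} {s : MvPolynomial (Fin n) ℝ} (hs : s.totalDegree ≤ d)
    (y : MIdx n (2 * d) → ℝ) :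
    riesz d (s ^ 2) y
      = dotProduct (fun α : MIdx n d => s.coeff α.1)
          ((momMat d y).mulVec fun α => s.coeff α.1) := by
  rw [pow_two, riesz_mul_eq hs hs, dotProduct_expand]

lemma riesz_g_sq {d : ℕ} (p : MvPolynomial (Fin n) ℝ) (hp : p.totalDegree ≤ 2 * d)
    {s : MvPolynomial (Fin n) ℝ} (hs : s.totalDegree ≤ d - (p.totalDegree + 1) / 2)
    (y : MIdx n (2 * d) → ℝ) :
    riesz d (p * s ^ 2) y
      = dotProduct (fun α => s.coeff α.1)
          ((locMat d p hp y).mulVec fun α => s.coeff α.1) := by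
  rw [pow_two, riesz_g_mul_eq p hp hs hs, dotProduct_expand]

lemma s17_isHermitian {I : Type*} [Fintype I] {M : Matrix I I ℝ}
    (h : ∀ a b, M a b = M b a) : M.IsHermitian := by
  refine Matrix.ext fun a b => ?_
  rw [Matrix.conjTranspose_apply]
  simp [h a b]

lemma s17_psd_of {I : Type*} [Fintype I] {M : Matrix I I ℝ}
    (h : ∀ a b, M a b = M b a) (hq : ∀ v, 0 ≤ dotProduct v (M.mulVec v)) :
    M.PosSemidef := by
  refine Matrix.PosSemidef.of_dotProduct_mulVec_nonneg (s17_isHermitian h) fun v => ?_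
  simpa using hq v

lemma s17_psd_quad {I : Type*} [Fintype I] {M : Matrix I I ℝ} (h : M.PosSemidef)
    (v : I → ℝ) : 0 ≤ dotProduct v (M.mulVec v) := by
  simpa using h.dotProduct_mulVec_nonneg v
lemma tmsNorm_nonneg {k : ℕ} (y : MIdx n k → ℝ) : 0 ≤ tmsNorm y := Real.sqrt_nonneg _

lemma tmsNorm_sq {k : ℕ} (y : MIdx n k → ℝ) : tmsNorm y ^ 2 = ∑ α, y α ^ 2 :=
  Real.sq_sqrt (Finset.sum_nonneg fun _ _ => sq_nonneg _)

lemma s17_CS {k : ℕ} (v w : MIdx n k → ℝ) :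
    ∑ α, v α * w α ≤ tmsNorm v * tmsNorm w :=
  Real.sum_mul_le_sqrt_mul_sqrt _ _ _

lemma tmsNorm_neg {k : ℕ} (v : MIdx n k → ℝ) : tmsNorm (-v) = tmsNorm v := by
  unfold tmsNorm; congr 1; exact Finset.sum_congr rfl fun α _ => by simp

lemma tmsNorm_smul {k : ℕ} {c : ℝ} (hc : 0 ≤ c) (v : MIdx n k → ℝ) :
    tmsNorm (c • v) = c * tmsNorm v := by
  unfold tmsNorm
  have he : ∑ α, (c • v) α ^ 2 = c ^ 2 * ∑ α, v α ^ 2 := by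
    rw [Finset.mul_sum]
    exact Finset.sum_congr rfl fun α _ => by simp [mul_pow]
  rw [he, Real.sqrt_mul (sq_nonneg c), Real.sqrt_sq hc]

lemma s17_CS' {k : ℕ} (v w : MIdx n k → ℝ) :
    -(tmsNorm v * tmsNorm w) ≤ ∑ α, v α * w α := by
  have h := s17_CS (-v) w
  rw [tmsNorm_neg] at h
  have he : ∑ α, (-v) α * w α = -∑ α, v α * w α := by
    rw [← Finset.sum_neg_distrib]; exact Finset.sum_congr rfl fun α _ => by simp
  rw [he] at h; linarith

lemma tmsNorm_triangle {k : ℕ} (v w : MIdx n k → ℝ) :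
    tmsNorm (v + w) ≤ tmsNorm v + tmsNorm w := by
  have hcs := s17_CS v w
  have hv := tmsNorm_nonneg v
  have hw := tmsNorm_nonneg w
  have hin : ∑ α, (v + w) α ^ 2 ≤ (tmsNorm v + tmsNorm w) ^ 2 := by
    have he : ∑ α, (v + w) α ^ 2
        = (∑ α, v α ^ 2) + 2 * (∑ α, v α * w α) + ∑ α, w α ^ 2 := by
      rw [Finset.mul_sum, ← Finset.sum_add_distrib, ← Finset.sum_add_distrib]
      exact Finset.sum_congr rfl fun α _ => by simp only [Pi.add_apply]; ring
    have h1 := tmsNorm_sq v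
    have h2 := tmsNorm_sq w
    rw [he, ← h1, ← h2]; nlinarith
  calc tmsNorm (v + w) ≤ Real.sqrt ((tmsNorm v + tmsNorm w) ^ 2) :=
        Real.sqrt_le_sqrt hin
    _ = tmsNorm v + tmsNorm w := Real.sqrt_sq (by positivity)

lemma tmsNorm_coord_le {k : ℕ} (y : MIdx n k → ℝ) (α : MIdx n k) : |y α| ≤ tmsNorm y := by
  rw [← Real.sqrt_sq_eq_abs]
  exact Real.sqrt_le_sqrt (Finset.single_le_sum (f := fun β => y β ^ 2)
    (fun β _ => sq_nonneg _) (Finset.mem_univ α))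

lemma riesz_eq_dot {d : ℕ} (p : MvPolynomial (Fin n) ℝ) (y : MIdx n (2 * d) → ℝ) :
    riesz d p y = ∑ α, vecPoly d p α * y α := rfl

lemma riesz_le_CS {d : ℕ} (p : MvPolynomial (Fin n) ℝ) (y : MIdx n (2 * d) → ℝ) :
    riesz d p y ≤ tmsNorm (vecPoly d p) * tmsNorm y := by
  rw [riesz_eq_dot]; exact s17_CS _ _

lemma riesz_ge_CS {d : ℕ} (p : MvPolynomial (Fin n) ℝ) (y : MIdx n (2 * d) → ℝ) :
    -(tmsNorm (vecPoly d p) * tmsNorm y) ≤ riesz d p y := by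
  rw [riesz_eq_dot]; exact s17_CS' _ _

lemma IsSOSDeg_zero {k : ℕ} : IsSOSDeg k (0 : MvPolynomial (Fin n) ℝ) :=
  ⟨0, fun _ => 0, fun j => by simp, by simp⟩

lemma IsSOSDeg_add {k : ℕ} {p q : MvPolynomial (Fin n) ℝ} (hp : IsSOSDeg k p)
    (hq : IsSOSDeg k q) : IsSOSDeg k (p + q) := by
  obtain ⟨r1, s1, hd1, rfl⟩ := hp
  obtain ⟨r2, s2, hd2, rfl⟩ := hq
  refine ⟨r1 + r2, Fin.append s1 s2, fun j => ?_, ?_⟩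
  · exact Fin.addCases (motive := fun j => (Fin.append s1 s2 j).totalDegree ≤ k)
      (fun i => by simp only [Fin.append_left]; exact hd1 i)
      (fun i => by simp only [Fin.append_right]; exact hd2 i) j
  · rw [Fin.sum_univ_add]
    simp only [Fin.append_left, Fin.append_right]

lemma IsSOSDeg_smul {k : ℕ} {c : ℝ} (hc : 0 ≤ c) {p : MvPolynomial (Fin n) ℝ}
    (hp : IsSOSDeg k p) : IsSOSDeg k (MvPolynomial.C c * p) := by
  obtain ⟨r, s, hd, rfl⟩ := hp
  refine ⟨r, fun j => MvPolynomial.C (Real.sqrt c) * s j, fun j => ?_, ?_⟩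
  · exact le_trans (MvPolynomial.totalDegree_mul _ _)
      (by rw [MvPolynomial.totalDegree_C, zero_add]; exact hd j)
  · rw [Finset.mul_sum]
    refine Finset.sum_congr rfl fun j _ => ?_
    rw [mul_pow, ← MvPolynomial.C_pow, Real.sq_sqrt hc]

lemma IsSOSDeg_sum_sq {k : ℕ} {I : Type*} [Fintype I] (s : I → MvPolynomial (Fin n) ℝ)
    (hdeg : ∀ j, (s j).totalDegree ≤ k) : IsSOSDeg k (∑ j, (s j) ^ 2) := by
  refine ⟨Fintype.card I, fun j => s ((Fintype.equivFin I).symm j), fun j => hdeg _, ?_⟩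
  exact (Equiv.sum_comp (Fintype.equivFin I).symm (fun i => s i ^ 2)).symm

lemma IsSOSDeg_sq {k : ℕ} {s : MvPolynomial (Fin n) ℝ} (hs : s.totalDegree ≤ k) :
    IsSOSDeg k (s ^ 2) :=
  ⟨1, fun _ => s, fun _ => hs, by simp⟩

section memQlemmas

variable {m : ℕ} {g : Fin m → MvPolynomial (Fin n) ℝ} {d : ℕ}

lemma memQ_zero : memQ d g 0 :=
  ⟨0, fun _ => 0, IsSOSDeg_zero, fun _ => IsSOSDeg_zero, by simp⟩

lemma memQ_add {p q : MvPolynomial (Fin n) ℝ} (hp : memQ d g p) (hq : memQ d g q) :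
    memQ d g (p + q) := by
  obtain ⟨σ₀, σ, h0, h1, rfl⟩ := hp
  obtain ⟨τ₀, τ, h2, h3, rfl⟩ := hq
  refine ⟨σ₀ + τ₀, fun i => σ i + τ i, IsSOSDeg_add h0 h2,
    fun i => IsSOSDeg_add (h1 i) (h3 i), ?_⟩
  simp only [mul_add, Finset.sum_add_distrib]
  ring

lemma memQ_smul {c : ℝ} (hc : 0 ≤ c) {p : MvPolynomial (Fin n) ℝ} (hp : memQ d g p) :
    memQ d g (MvPolynomial.C c * p) := by
  obtain ⟨σ₀, σ, h0, h1, rfl⟩ := hp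
  refine ⟨MvPolynomial.C c * σ₀, fun i => MvPolynomial.C c * σ i, IsSOSDeg_smul hc h0,
    fun i => IsSOSDeg_smul hc (h1 i), ?_⟩
  rw [mul_add, Finset.mul_sum]
  congr 1
  exact Finset.sum_congr rfl fun i _ => by ring

lemma memQ_sq {s : MvPolynomial (Fin n) ℝ} (hs : s.totalDegree ≤ d) : memQ d g (s ^ 2) :=
  ⟨s ^ 2, fun _ => 0, IsSOSDeg_sq hs, fun _ => IsSOSDeg_zero, by simp⟩

lemma memQ_gsq (i : Fin m) {s : MvPolynomial (Fin n) ℝ}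
    (hs : s.totalDegree ≤ d - ((g i).totalDegree + 1) / 2) : memQ d g (g i * s ^ 2) := by
  classical
  refine ⟨0, fun j => if h : j = i then s ^ 2 else 0, IsSOSDeg_zero, fun j => ?_, ?_⟩
  · by_cases h : j = i
    · subst h; simpa using IsSOSDeg_sq hs
    · simpa [h] using (IsSOSDeg_zero (n := n) (k := d - ((g j).totalDegree + 1) / 2))
  · rw [zero_add, Finset.sum_eq_single i]
    · simp
    · intro b _ hb; simp [hb]
    · simp

lemma memQ_riesz_nonneg (hg : ∀ i, (g i).totalDegree ≤ 2 * d) (y : MIdx n (2 * d) → ℝ)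
    (hmom : (momMat d y).PosSemidef)
    (hloc : ∀ i, (locMat d (g i) (hg i) y).PosSemidef)
    {q : MvPolynomial (Fin n) ℝ} (hq : memQ d g q) : 0 ≤ riesz d q y := by
  obtain ⟨σ₀, σ, h0, h1, rfl⟩ := hq
  rw [riesz_add, riesz_sum]
  have ha : 0 ≤ riesz d σ₀ y := by
    obtain ⟨r, s, hsd, rfl⟩ := h0
    rw [riesz_sum]
    refine Finset.sum_nonneg fun j _ => ?_
    rw [riesz_sq (hsd j)]
    exact s17_psd_quad hmom _
  have hb : ∀ i ∈ Finset.univ, 0 ≤ riesz d (g i * σ i) y := by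
    intro i _
    obtain ⟨r, s, hsd, hs⟩ := h1 i
    rw [hs, Finset.mul_sum, riesz_sum]
    refine Finset.sum_nonneg fun j _ => ?_
    rw [riesz_g_sq (g i) (hg i) (hsd j)]
    exact s17_psd_quad (hloc i) _
  exact add_nonneg ha (Finset.sum_nonneg hb)

end memQlemmas
lemma s17_coercive {d : ℕ} {f θ : MvPolynomial (Fin n) ℝ}
    (hθ : θ = ∑ α : MIdx n d, MvPolynomial.monomial (α.1 + α.1) (1 : ℝ))
    (ε : ℝ) (y : MIdx n (2 * d) → ℝ) (hmom : (momMat d y).PosSemidef) :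
    (ε - tmsNorm (vecPoly d (f - θ))) * tmsNorm y ≤ riesz d f y + ε * tmsNorm y := by
  have hθnn : 0 ≤ riesz d θ y := by
    have hθs : θ = ∑ α : MIdx n d, (MvPolynomial.monomial α.1 (1 : ℝ)) ^ 2 := by
      rw [hθ]
      exact Finset.sum_congr rfl fun α _ => by
        rw [pow_two, MvPolynomial.monomial_mul, one_mul]
    rw [hθs, riesz_sum]
    refine Finset.sum_nonneg fun α _ => ?_
    have hdeg : (MvPolynomial.monomial α.1 (1 : ℝ)).totalDegree ≤ d :=
      le_trans (MvPolynomial.totalDegree_monomial_le _ _)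
        (le_trans (le_of_eq (s17_sum_eq α.1)) α.2)
    rw [riesz_sq hdeg]
    exact s17_psd_quad hmom _
  have hfθ : riesz d f y = riesz d (f - θ) y + riesz d θ y := by
    rw [← riesz_add, sub_add_cancel]
  have hcs := riesz_ge_CS (f - θ) y
  rw [sub_mul]
  linarith

lemma s17_prod_add (x : Fin n → ℝ) (σ τ : Fin n →₀ ℕ) :
    (∏ i, x i ^ (σ + τ) i) = (∏ i, x i ^ σ i) * ∏ i, x i ^ τ i := by
  rw [← Finset.prod_mul_distrib]
  exact Finset.prod_congr rfl fun i _ => by simp [Finsupp.add_apply, pow_add]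

lemma s17_rank1_psd {I : Type*} [Fintype I] (u : I → ℝ) (c : ℝ) (hc : 0 ≤ c)
    (M : Matrix I I ℝ) (hM : ∀ a b, M a b = c * (u a * u b)) : M.PosSemidef := by
  refine s17_psd_of (fun a b => by rw [hM, hM]; ring) fun v => ?_
  rw [dotProduct_expand]
  have he : ∑ a, ∑ b, v a * v b * M a b = c * (∑ a, v a * u a) ^ 2 := by
    rw [pow_two, Finset.sum_mul_sum, Finset.mul_sum]
    refine Finset.sum_congr rfl fun a _ => ?_
    rw [Finset.mul_sum]
    refine Finset.sum_congr rfl fun b _ => ?_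
    rw [hM]; ring
  rw [he]; positivity

lemma s17_momMat_eval {d : ℕ} (x : Fin n → ℝ) (α β : MIdx n d) :
    momMat d (monVec (2 * d) x) α β = monVec d x α * monVec d x β :=
  s17_prod_add x α.1 β.1

lemma s17_eval_eq (p : MvPolynomial (Fin n) ℝ) (x : Fin n → ℝ) :
    MvPolynomial.eval x p = ∑ γ ∈ p.support, p.coeff γ * ∏ i, x i ^ γ i :=
  MvPolynomial.eval_eq' x p

lemma s17_locMat_eval {d : ℕ} (p : MvPolynomial (Fin n) ℝ) (hp : p.totalDegree ≤ 2 * d)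
    (x : Fin n → ℝ) (α β : MIdx n (d - (p.totalDegree + 1) / 2)) :
    locMat d p hp (monVec (2 * d) x) α β
      = MvPolynomial.eval x p * (monVec _ x α * monVec _ x β) := by
  rw [locMat_apply, s17_eval_eq, Finset.sum_mul]
  refine Finset.sum_congr rfl fun γ hγ => ?_
  rw [Yext_eq _ (s17_loc_bound hp hγ α β)]
  have : (monVec (2 * d) x) ⟨α.1 + β.1 + γ, s17_loc_bound hp hγ α β⟩
      = (monVec _ x α * monVec _ x β) * ∏ i, x i ^ γ i := by
    show (∏ i, x i ^ (α.1 + β.1 + γ) i) = _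
    rw [s17_prod_add, s17_prod_add]; rfl
  rw [this]; ring

lemma s17_pt_feasible {m d : ℕ} (g : Fin m → MvPolynomial (Fin n) ℝ)
    (hg : ∀ i, (g i).totalDegree ≤ 2 * d) (x : Fin n → ℝ)
    (hx : ∀ i, 0 ≤ MvPolynomial.eval x (g i)) :
    (monVec (2 * d) x) ⟨0, by simp⟩ = 1 ∧ (momMat d (monVec (2 * d) x)).PosSemidef ∧
      ∀ i, (locMat d (g i) (hg i) (monVec (2 * d) x)).PosSemidef := by
  refine ⟨by simp [monVec], ?_, fun i => ?_⟩
  · exact s17_rank1_psd (monVec d x) 1 zero_le_one _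
      (fun a b => by rw [one_mul]; exact s17_momMat_eval x a b)
  · exact s17_rank1_psd (monVec _ x) _ (hx i) _ (fun a b => s17_locMat_eval (g i) (hg i) x a b)

lemma s17_cont_riesz {d : ℕ} (f : MvPolynomial (Fin n) ℝ) :
    Continuous fun y : MIdx n (2 * d) → ℝ => riesz d f y := by
  unfold riesz
  exact continuous_finset_sum _ fun α _ => continuous_const.mul (continuous_apply α)

lemma s17_cont_tmsNorm {k : ℕ} : Continuous (tmsNorm : (MIdx n k → ℝ) → ℝ) := by
  unfold tmsNorm
  exact Real.continuous_sqrt.comp (continuous_finset_sum _ fun α _ =>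
    (continuous_apply α).pow 2)

lemma s17_isClosed_psd {V : Type*} [TopologicalSpace V] {I : Type*} [Fintype I]
    (M : V → Matrix I I ℝ) (hsymm : ∀ y a b, M y a b = M y b a)
    (hcont : ∀ a b, Continuous fun y => M y a b) :
    IsClosed {y | (M y).PosSemidef} := by
  have he : {y | (M y).PosSemidef}
      = ⋂ v : I → ℝ, {y | 0 ≤ dotProduct v ((M y).mulVec v)} := by
    ext y
    simp only [Set.mem_iInter, Set.mem_setOf_eq]
    exact ⟨fun h v => s17_psd_quad h v, fun h => s17_psd_of (hsymm y) h⟩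
  rw [he]
  refine isClosed_iInter fun v => isClosed_le continuous_const ?_
  have hfe : (fun y => dotProduct v ((M y).mulVec v))
      = fun y => ∑ a, ∑ b, v a * v b * M y a b := funext fun y => dotProduct_expand _ _ _
  rw [hfe]
  exact continuous_finset_sum _ fun a _ => continuous_finset_sum _ fun b _ =>
    (continuous_const.mul (hcont a b))

lemma s17_cont_momMat {d : ℕ} (a b : MIdx n d) :
    Continuous fun y : MIdx n (2 * d) → ℝ => momMat d y a b := continuous_apply _

lemma s17_cont_locMat {d : ℕ} (p : MvPolynomial (Fin n) ℝ) (hp : p.totalDegree ≤ 2 * d)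
    (a b : MIdx n (d - (p.totalDegree + 1) / 2)) :
    Continuous fun y : MIdx n (2 * d) → ℝ => locMat d p hp y a b := by
  unfold locMat
  exact continuous_finset_sum _ fun γ _ => continuous_const.mul (continuous_apply _)

lemma s17_compact_tmsBall {k : ℕ} (R : ℝ) :
    IsCompact {y : MIdx n k → ℝ | tmsNorm y ≤ R} := by
  refine IsCompact.of_isClosed_subset
    (isCompact_univ_pi fun α : MIdx n k => isCompact_Icc (a := -R) (b := R))
    (isClosed_le s17_cont_tmsNorm continuous_const) ?_
  intro y hy
  refine Set.mem_univ_pi.2 fun α => ?_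
  exact Set.mem_Icc.2 (abs_le.1 (le_trans (tmsNorm_coord_le y α) hy))

lemma s17_primal {m d : ℕ} (g : Fin m → MvPolynomial (Fin n) ℝ)
    (hg : ∀ i, (g i).totalDegree ≤ 2 * d)
    (f θ : MvPolynomial (Fin n) ℝ)
    (hθ : θ = ∑ α : MIdx n d, MvPolynomial.monomial (α.1 + α.1) (1 : ℝ))
    (ε : ℝ) (hε : tmsNorm (vecPoly d (f - θ)) < ε)
    (x0 : Fin n → ℝ) (hx0 : ∀ i, 0 ≤ MvPolynomial.eval x0 (g i)) :
    ∃ ystar : MIdx n (2 * d) → ℝ,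
      (ystar ⟨0, by simp⟩ = 1 ∧ (momMat d ystar).PosSemidef ∧
        ∀ i, (locMat d (g i) (hg i) ystar).PosSemidef) ∧
      ∀ y : MIdx n (2 * d) → ℝ,
        y ⟨0, by simp⟩ = 1 → (momMat d y).PosSemidef →
        (∀ i, (locMat d (g i) (hg i) y).PosSemidef) →
        riesz d f ystar + ε * tmsNorm ystar ≤ riesz d f y + ε * tmsNorm y := by
  classical
  set c := tmsNorm (vecPoly d (f - θ)) with hc
  have hδ : 0 < ε - c := by rw [hc]; linarith
  set φ : (MIdx n (2 * d) → ℝ) → ℝ := fun y => riesz d f y + ε * tmsNorm y with hφ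
  set Feas : Set (MIdx n (2 * d) → ℝ) :=
    {y | y ⟨0, by simp⟩ = 1 ∧ (momMat d y).PosSemidef ∧
      ∀ i, (locMat d (g i) (hg i) y).PosSemidef} with hF
  have hcont : Continuous φ :=
    (s17_cont_riesz f).add (continuous_const.mul s17_cont_tmsNorm)
  have hclosed : IsClosed Feas := by
    have hFeq : Feas = {y : MIdx n (2 * d) → ℝ | y ⟨0, by simp⟩ = 1}
        ∩ ({y | (momMat d y).PosSemidef}
          ∩ ⋂ i, {y | (locMat d (g i) (hg i) y).PosSemidef}) := by
      ext y
      simp only [hF, Set.mem_setOf_eq, Set.mem_inter_iff, Set.mem_iInter]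
    rw [hFeq]
    refine IsClosed.inter (isClosed_eq (continuous_apply _) continuous_const) ?_
    exact IsClosed.inter (s17_isClosed_psd _ (fun y => momMat_symm y) s17_cont_momMat)
      (isClosed_iInter fun i =>
        s17_isClosed_psd _ (fun y => locMat_symm (g i) (hg i) y) (s17_cont_locMat _ _))
  have hcoer : ∀ y, (momMat d y).PosSemidef → (ε - c) * tmsNorm y ≤ φ y :=
    fun y h => s17_coercive hθ ε y h
  set y1 := monVec (2 * d) x0 with hy1e
  have hy1 : y1 ∈ Feas := s17_pt_feasible g hg x0 hx0
  have hφy1 : 0 ≤ φ y1 :=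
    le_trans (mul_nonneg hδ.le (tmsNorm_nonneg y1)) (hcoer y1 hy1.2.1)
  set R := φ y1 / (ε - c) with hR
  have hRy1 : tmsNorm y1 ≤ R := by
    rw [hR, le_div_iff₀ hδ]
    have := hcoer y1 hy1.2.1
    linarith [this]
  set S := Feas ∩ {y | tmsNorm y ≤ R} with hS
  have hSne : S.Nonempty := ⟨y1, hy1, hRy1⟩
  have hScomp : IsCompact S :=
    IsCompact.of_isClosed_subset (s17_compact_tmsBall R)
      (hclosed.inter (isClosed_le s17_cont_tmsNorm continuous_const))
      Set.inter_subset_right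
  obtain ⟨ystar, hyS, hmin⟩ := hScomp.exists_isMinOn hSne hcont.continuousOn
  refine ⟨ystar, hyS.1, fun y h0 h1 h2 => ?_⟩
  have hyF : y ∈ Feas := ⟨h0, h1, h2⟩
  show φ ystar ≤ φ y
  by_cases hyR : tmsNorm y ≤ R
  · exact isMinOn_iff.1 hmin y ⟨hyF, hyR⟩
  · have h3 : φ y1 ≤ φ y := by
      have h4 := hcoer y h1
      have h5 : (ε - c) * R ≤ (ε - c) * tmsNorm y :=
        mul_le_mul_of_nonneg_left (le_of_not_ge hyR) hδ.le
      have h6 : (ε - c) * R = φ y1 := by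
        rw [hR, mul_div_cancel₀ _ (ne_of_gt hδ)]
      linarith
    exact le_trans (isMinOn_iff.1 hmin y1 ⟨hy1, hRy1⟩) h3
lemma s17_poly_eval_line (p : MvPolynomial (Fin n) ℝ) (a v : Fin n → ℝ) (t : ℝ) :
    Polynomial.eval t (MvPolynomial.aeval
        (fun i => Polynomial.C (a i) + Polynomial.C (v i) * Polynomial.X) p)
      = MvPolynomial.eval (fun i => a i + v i * t) p := by
  have h : (Polynomial.evalRingHom t).comp
      (((MvPolynomial.aeval
          (fun i => Polynomial.C (a i) + Polynomial.C (v i) * Polynomial.X))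
        : MvPolynomial (Fin n) ℝ →ₐ[ℝ] Polynomial ℝ) : MvPolynomial (Fin n) ℝ →+* Polynomial ℝ)
      = (MvPolynomial.eval (fun i => a i + v i * t) : MvPolynomial (Fin n) ℝ →+* ℝ) := by
    apply MvPolynomial.ringHom_ext
    · intro r; simp
    · intro i; simp
  exact RingHom.congr_fun h p

lemma s17_vanish_open {p : MvPolynomial (Fin n) ℝ} {U : Set (Fin n → ℝ)} (hU : IsOpen U)
    (hne : U.Nonempty) (hvan : ∀ x ∈ U, MvPolynomial.eval x p = 0) : p = 0 := by
  obtain ⟨a, ha⟩ := hne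
  obtain ⟨δ, hδ, hball⟩ := Metric.isOpen_iff.1 hU a ha
  have key : ∀ v : Fin n → ℝ, MvPolynomial.eval (fun i => a i + v i * 1) p = 0 := by
    intro v
    set r := δ / (‖v‖ + 1) with hr
    have hvn : 0 ≤ ‖v‖ := norm_nonneg v
    have hrpos : 0 < r := by rw [hr]; positivity
    set P := MvPolynomial.aeval
      (fun i => Polynomial.C (a i) + Polynomial.C (v i) * Polynomial.X) p with hP
    have hroots : ∀ t ∈ Set.Ioo (-r) r, Polynomial.IsRoot P t := by
      intro t ht
      have habs : |t| < r := abs_lt.2 ⟨ht.1, ht.2⟩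
      have hmem : (fun i => a i + v i * t) ∈ U := by
        apply hball
        rw [Metric.mem_ball, dist_pi_lt_iff hδ]
        intro i
        rw [Real.dist_eq]
        have h1 : |a i + v i * t - a i| = |v i| * |t| := by
          rw [show a i + v i * t - a i = v i * t by ring, abs_mul]
        rw [h1]
        have h2 : |v i| ≤ ‖v‖ := by
          rw [← Real.norm_eq_abs]; exact norm_le_pi_norm v i
        have h3 : (‖v‖ + 1) * r = δ := by
          rw [hr, mul_div_cancel₀ _ (by positivity)]
        nlinarith [abs_nonneg t, abs_nonneg (v i)]
      have hz := hvan _ hmem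
      show Polynomial.eval t P = 0
      rw [hP, s17_poly_eval_line]
      exact hz
    have hPz : P = 0 :=
      Polynomial.eq_zero_of_infinite_isRoot P
        ((Set.Ioo_infinite (by linarith : -r < r)).mono hroots)
    have he := s17_poly_eval_line p a v 1
    rw [← hP, hPz] at he
    simpa using he.symm
  have : ∀ x : Fin n → ℝ, MvPolynomial.eval x p = MvPolynomial.eval x (0 : MvPolynomial (Fin n) ℝ) := by
    intro x
    have := key (fun i => x i - a i)
    simpa using this
  exact MvPolynomial.funext this

lemma s17_vecPoly_inj {d : ℕ} {a b : MvPolynomial (Fin n) ℝ} (ha : a.totalDegree ≤ 2 * d)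
    (hb : b.totalDegree ≤ 2 * d) (h : vecPoly d a = vecPoly d b) : a = b := by
  rw [s17_as_sum ha, s17_as_sum hb]
  exact Finset.sum_congr rfl fun α _ => by rw [show a.coeff α.1 = b.coeff α.1 from congrFun h α]

/-- the polynomial `[x]ₖᵀ M [x]ₖ` of a Gram matrix -/
noncomputable def grams {n : ℕ} (k : ℕ) (M : Matrix (MIdx n k) (MIdx n k) ℝ) :
    MvPolynomial (Fin n) ℝ :=
  ∑ α : MIdx n k, ∑ β : MIdx n k, MvPolynomial.monomial (α.1 + β.1) (M α β)

lemma grams_totalDegree {k : ℕ} (M : Matrix (MIdx n k) (MIdx n k) ℝ) :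
    (grams k M).totalDegree ≤ 2 * k := by
  refine le_trans (MvPolynomial.totalDegree_finset_sum _ _) (Finset.sup_le fun α _ => ?_)
  refine le_trans (MvPolynomial.totalDegree_finset_sum _ _) (Finset.sup_le fun β _ => ?_)
  refine le_trans (MvPolynomial.totalDegree_monomial_le _ _) ?_
  refine le_trans (le_of_eq (s17_sum_eq (α.1 + β.1))) ?_
  rw [s17_sum_add]
  have := α.2; have := β.2; omega

lemma s17_eval_monomial (x : Fin n → ℝ) (σ : Fin n →₀ ℕ) (c : ℝ) :
    MvPolynomial.eval x (MvPolynomial.monomial σ c) = c * ∏ i, x i ^ σ i := by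
  rw [MvPolynomial.eval_monomial]
  congr 1
  exact Finsupp.prod_fintype _ _ (fun i => pow_zero (x i))

lemma grams_eval {k : ℕ} (M : Matrix (MIdx n k) (MIdx n k) ℝ) (x : Fin n → ℝ) :
    MvPolynomial.eval x (grams k M)
      = dotProduct (monVec k x) (M.mulVec (monVec k x)) := by
  rw [dotProduct_expand, grams, map_sum]
  refine Finset.sum_congr rfl fun α _ => ?_
  rw [map_sum]
  refine Finset.sum_congr rfl fun β _ => ?_
  rw [s17_eval_monomial, s17_prod_add]
  show M α β * ((monVec k x α) * (monVec k x β)) = _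
  ring

lemma polyAt_sq {k : ℕ} (v : MIdx n k → ℝ) :
    (polyAt k v) ^ 2 = ∑ α : MIdx n k, ∑ β : MIdx n k,
      MvPolynomial.monomial (α.1 + β.1) (v α * v β) := by
  rw [pow_two, polyAt, Finset.sum_mul_sum]
  refine Finset.sum_congr rfl fun α _ => Finset.sum_congr rfl fun β _ => ?_
  rw [MvPolynomial.monomial_mul]

lemma grams_entry_sum {k : ℕ} {I : Type*} [Fintype I] (c : I → MIdx n k → ℝ) :
    grams k (fun α β => ∑ j, c j α * c j β) = ∑ j, (polyAt k (c j)) ^ 2 := by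
  unfold grams
  have h1 : ∀ α β : MIdx n k, (MvPolynomial.monomial (α.1 + β.1) (∑ j, c j α * c j β))
      = ∑ j, MvPolynomial.monomial (α.1 + β.1) (c j α * c j β) :=
    fun α β => map_sum (MvPolynomial.monomial _) _ _
  have h2 : ∑ j, (polyAt k (c j)) ^ 2
      = ∑ j, ∑ α : MIdx n k, ∑ β : MIdx n k,
          MvPolynomial.monomial (α.1 + β.1) (c j α * c j β) :=
    Finset.sum_congr rfl fun j _ => polyAt_sq (c j)
  rw [h2]
  calc (∑ α : MIdx n k, ∑ β : MIdx n k,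
          MvPolynomial.monomial (α.1 + β.1) ((fun α β => ∑ j, c j α * c j β) α β))
      = ∑ α : MIdx n k, ∑ β : MIdx n k, ∑ j,
          MvPolynomial.monomial (α.1 + β.1) (c j α * c j β) :=
        Finset.sum_congr rfl fun α _ => Finset.sum_congr rfl fun β _ => h1 α β
    _ = ∑ α : MIdx n k, ∑ j, ∑ β : MIdx n k,
          MvPolynomial.monomial (α.1 + β.1) (c j α * c j β) :=
        Finset.sum_congr rfl fun α _ => Finset.sum_comm
    _ = ∑ j, ∑ α : MIdx n k, ∑ β : MIdx n k,
          MvPolynomial.monomial (α.1 + β.1) (c j α * c j β) := Finset.sum_comm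

open scoped MatrixOrder in
lemma s17_psd_factor {I : Type*} [Fintype I] {M : Matrix I I ℝ} (hM : M.PosSemidef) :
    ∃ B : Matrix I I ℝ, M = B.conjTranspose * B := by
  classical
  obtain ⟨B, hB⟩ := CStarAlgebra.nonneg_iff_eq_star_mul_self.mp hM.nonneg
  exact ⟨B, hB⟩

lemma grams_sos {k : ℕ} {M : Matrix (MIdx n k) (MIdx n k) ℝ} (hM : M.PosSemidef) :
    IsSOSDeg k (grams k M) := by
  obtain ⟨B, rfl⟩ := s17_psd_factor hM
  have he : grams k (B.conjTranspose * B) = ∑ j : MIdx n k, (polyAt k (fun α => B j α)) ^ 2 := by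
    have h1 : (B.conjTranspose * B) = fun α β => ∑ j, B j α * B j β := by
      funext α β
      rw [Matrix.mul_apply]
      exact Finset.sum_congr rfl fun j _ => by
        rw [Matrix.conjTranspose_apply]; simp
    rw [h1]
    exact grams_entry_sum (fun j α => B j α)
  rw [he]
  exact IsSOSDeg_sum_sq _ fun j => polyAt_totalDegree _

lemma sos_grams {k : ℕ} {σ : MvPolynomial (Fin n) ℝ} (hσ : IsSOSDeg k σ) :
    ∃ M : Matrix (MIdx n k) (MIdx n k) ℝ, M.PosSemidef ∧ grams k M = σ := by
  obtain ⟨r, s, hd, rfl⟩ := hσ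
  refine ⟨fun α β => ∑ j, (s j).coeff α.1 * (s j).coeff β.1, ?_, ?_⟩
  · refine s17_psd_of (fun a b => Finset.sum_congr rfl fun j _ => by ring) fun v => ?_
    erw [dotProduct_expand]
    have h0 : ∀ j : Fin r, (∑ a : MIdx n k, v a * (s j).coeff a.1) ^ 2
        = ∑ a : MIdx n k, ∑ b : MIdx n k,
            v a * v b * ((s j).coeff a.1 * (s j).coeff b.1) := by
      intro j
      rw [pow_two, Finset.sum_mul_sum]
      exact Finset.sum_congr rfl fun a _ => Finset.sum_congr rfl fun b _ => by ring
    have he : ∑ a, ∑ b, v a * v b * (∑ j, (s j).coeff a.1 * (s j).coeff b.1)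
        = ∑ j, (∑ a : MIdx n k, v a * (s j).coeff a.1) ^ 2 := by
      calc ∑ a, ∑ b, v a * v b * (∑ j, (s j).coeff a.1 * (s j).coeff b.1)
          = ∑ a : MIdx n k, ∑ b : MIdx n k, ∑ j,
              v a * v b * ((s j).coeff a.1 * (s j).coeff b.1) := by
            refine Finset.sum_congr rfl fun a _ => Finset.sum_congr rfl fun b _ => ?_
            rw [Finset.mul_sum]
        _ = ∑ a : MIdx n k, ∑ j, ∑ b : MIdx n k,
              v a * v b * ((s j).coeff a.1 * (s j).coeff b.1) :=
            Finset.sum_congr rfl fun a _ => Finset.sum_comm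
        _ = ∑ j, ∑ a : MIdx n k, ∑ b : MIdx n k,
              v a * v b * ((s j).coeff a.1 * (s j).coeff b.1) := Finset.sum_comm
        _ = ∑ j, (∑ a : MIdx n k, v a * (s j).coeff a.1) ^ 2 :=
            Finset.sum_congr rfl fun j _ => (h0 j).symm
    rw [he]
    exact Finset.sum_nonneg fun j _ => sq_nonneg _
  · rw [grams_entry_sum (fun j α => (s j).coeff α.1)]
    refine Finset.sum_congr rfl fun j _ => ?_
    have hpj : polyAt k (fun α : MIdx n k => (s j).coeff α.1) = s j := (s17_as_sum (hd j)).symm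
    rw [hpj]
section Gram

variable {m : ℕ}

/-- The space of Gram matrix tuples (as plain functions, to get Pi norm instances). -/
abbrev s17W (n m d : ℕ) (g : Fin m → MvPolynomial (Fin n) ℝ) : Type :=
  (MIdx n d → MIdx n d → ℝ) ×
    ((i : Fin m) → (MIdx n (d - ((g i).totalDegree + 1) / 2) →
      MIdx n (d - ((g i).totalDegree + 1) / 2) → ℝ))

/-- The PSD cone in `s17W`. -/
def s17C (n m d : ℕ) (g : Fin m → MvPolynomial (Fin n) ℝ) : Set (s17W n m d g) :=
  {X | (Matrix.of X.1).PosSemidef ∧ ∀ i, (Matrix.of (X.2 i)).PosSemidef}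

/-- The polynomial associated with a Gram tuple. -/
noncomputable def gramPoly (d : ℕ) (g : Fin m → MvPolynomial (Fin n) ℝ)
    (X : s17W n m d g) : MvPolynomial (Fin n) ℝ :=
  grams d (Matrix.of X.1)
    + ∑ i, g i * grams (d - ((g i).totalDegree + 1) / 2) (Matrix.of (X.2 i))

lemma gramPoly_totalDegree (d : ℕ) (g : Fin m → MvPolynomial (Fin n) ℝ)
    (hg : ∀ i, (g i).totalDegree ≤ 2 * d) (X : s17W n m d g) :
    (gramPoly d g X).totalDegree ≤ 2 * d := by
  refine le_trans (MvPolynomial.totalDegree_add _ _) (max_le (grams_totalDegree _) ?_)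
  refine le_trans (MvPolynomial.totalDegree_finset_sum _ _) (Finset.sup_le fun i _ => ?_)
  refine le_trans (MvPolynomial.totalDegree_mul _ _) ?_
  have h1 := grams_totalDegree (Matrix.of (X.2 i))
  have h2 := hg i
  omega

lemma gramPoly_memQ (d : ℕ) (g : Fin m → MvPolynomial (Fin n) ℝ)
    {X : s17W n m d g} (hX : X ∈ s17C n m d g) : memQ d g (gramPoly d g X) :=
  ⟨grams d (Matrix.of X.1),
   fun i => grams (d - ((g i).totalDegree + 1) / 2) (Matrix.of (X.2 i)),
   grams_sos hX.1, fun i => grams_sos (hX.2 i), rfl⟩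

lemma memQ_gramPoly (d : ℕ) (g : Fin m → MvPolynomial (Fin n) ℝ)
    {q : MvPolynomial (Fin n) ℝ} (hq : memQ d g q) :
    ∃ X ∈ s17C n m d g, gramPoly d g X = q := by
  obtain ⟨σ₀, σ, h0, h1, rfl⟩ := hq
  obtain ⟨M0, hM0, hM0e⟩ := sos_grams h0
  choose Mi hMi hMie using fun i => sos_grams (h1 i)
  exact ⟨⟨M0, Mi⟩, ⟨hM0, hMi⟩, by
    unfold gramPoly
    simp only [Matrix.of_apply]
    rw [show Matrix.of (M0 : MIdx n d → MIdx n d → ℝ) = M0 from rfl, hM0e]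
    congr 1
    exact Finset.sum_congr rfl fun i _ => by
      rw [show Matrix.of ((Mi i : _)) = Mi i from rfl, hMie i]⟩

lemma grams_add {k : ℕ} (M N : Matrix (MIdx n k) (MIdx n k) ℝ) :
    grams k (M + N) = grams k M + grams k N := by
  unfold grams
  rw [← Finset.sum_add_distrib]
  refine Finset.sum_congr rfl fun α _ => ?_
  rw [← Finset.sum_add_distrib]
  refine Finset.sum_congr rfl fun β _ => ?_
  rw [Matrix.add_apply, map_add]

lemma grams_smul {k : ℕ} (c : ℝ) (M : Matrix (MIdx n k) (MIdx n k) ℝ) :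
    grams k (c • M) = c • grams k M := by
  unfold grams
  rw [Finset.smul_sum]
  refine Finset.sum_congr rfl fun α _ => ?_
  rw [Finset.smul_sum]
  refine Finset.sum_congr rfl fun β _ => ?_
  rw [Matrix.smul_apply, MvPolynomial.smul_monomial, smul_eq_mul]

lemma vecPoly_add' (d : ℕ) (p q : MvPolynomial (Fin n) ℝ) :
    vecPoly d (p + q) = vecPoly d p + vecPoly d q := by
  funext α; simp [vecPoly, MvPolynomial.coeff_add]

lemma vecPoly_smul' (d : ℕ) (c : ℝ) (p : MvPolynomial (Fin n) ℝ) :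
    vecPoly d (c • p) = c • vecPoly d p := by
  funext α; simp [vecPoly, MvPolynomial.coeff_smul]

/-- the linear map from Gram tuples to coefficient vectors -/
noncomputable def s17L (n m d : ℕ) (g : Fin m → MvPolynomial (Fin n) ℝ) :
    s17W n m d g →ₗ[ℝ] (MIdx n (2 * d) → ℝ) where
  toFun X := vecPoly d (gramPoly d g X)
  map_add' X Y := by
    have he : gramPoly d g (X + Y) = gramPoly d g X + gramPoly d g Y := by
      unfold gramPoly
      have h1 : Matrix.of (X + Y).1 = Matrix.of X.1 + Matrix.of Y.1 := rfl
      have h2 : ∀ i, Matrix.of ((X + Y).2 i) = Matrix.of (X.2 i) + Matrix.of (Y.2 i) :=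
        fun i => rfl
      rw [h1, grams_add]
      have h3 : ∀ i ∈ Finset.univ,
          g i * grams _ (Matrix.of ((X + Y).2 i))
          = g i * grams _ (Matrix.of (X.2 i)) + g i * grams _ (Matrix.of (Y.2 i)) := by
        intro i _; rw [h2 i, grams_add, mul_add]
      rw [Finset.sum_congr rfl h3, Finset.sum_add_distrib]
      ring
    show vecPoly d (gramPoly d g (X + Y)) = _
    rw [he, vecPoly_add']
  map_smul' c X := by
    have he : gramPoly d g (c • X) = c • gramPoly d g X := by
      unfold gramPoly
      have h1 : Matrix.of (c • X).1 = c • Matrix.of X.1 := rfl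
      have h2 : ∀ i, Matrix.of ((c • X).2 i) = c • Matrix.of (X.2 i) := fun i => rfl
      rw [h1, grams_smul, smul_add]
      congr 1
      rw [Finset.smul_sum]
      refine Finset.sum_congr rfl fun i _ => ?_
      rw [h2 i, grams_smul, mul_smul_comm]
    show vecPoly d (gramPoly d g (c • X)) = _
    rw [he, vecPoly_smul']
    rfl

lemma s17_psd_symm {I : Type*} [Fintype I] {M : Matrix I I ℝ} (h : M.PosSemidef) :
    ∀ a b, M a b = M b a := by
  intro a b
  have h1 := congrFun (congrFun h.1 a) b
  rw [Matrix.conjTranspose_apply] at h1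
  simpa using h1.symm

lemma s17_psd_smul {I : Type*} [Fintype I] {M : Matrix I I ℝ} (h : M.PosSemidef)
    {c : ℝ} (hc : 0 ≤ c) : (c • M).PosSemidef := by
  refine s17_psd_of (fun a b => ?_) fun v => ?_
  · rw [Matrix.smul_apply, Matrix.smul_apply, s17_psd_symm h a b]
  · rw [dotProduct_expand]
    have he : ∑ a, ∑ b, v a * v b * (c • M) a b
        = c * ∑ a, ∑ b, v a * v b * M a b := by
      rw [Finset.mul_sum]
      refine Finset.sum_congr rfl fun a _ => ?_
      rw [Finset.mul_sum]
      refine Finset.sum_congr rfl fun b _ => ?_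
      rw [Matrix.smul_apply]
      simp only [smul_eq_mul]; ring
    rw [he]
    have := s17_psd_quad h v
    rw [dotProduct_expand] at this
    positivity

lemma s17_isClosed_psd_set {I : Type*} [Fintype I] :
    IsClosed {M : I → I → ℝ | (Matrix.of M).PosSemidef} := by
  have he : {M : I → I → ℝ | (Matrix.of M).PosSemidef}
      = {M : I → I → ℝ | ∀ a, ∀ b, M a b = M b a}
        ∩ ⋂ v : I → ℝ, {M | 0 ≤ dotProduct v ((Matrix.of M).mulVec v)} := by
    ext M
    simp only [Set.mem_setOf_eq, Set.mem_inter_iff, Set.mem_iInter]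
    constructor
    · exact fun h => ⟨fun a b => s17_psd_symm h a b, fun v => s17_psd_quad h v⟩
    · exact fun ⟨hs, hq⟩ => s17_psd_of hs hq
  rw [he]
  refine IsClosed.inter ?_ ?_
  · have : {M : I → I → ℝ | ∀ a, ∀ b, M a b = M b a}
        = ⋂ a, ⋂ b, {M : I → I → ℝ | M a b = M b a} := by
      ext M; simp
    rw [this]
    exact isClosed_iInter fun a => isClosed_iInter fun b =>
      isClosed_eq ((continuous_apply b).comp (continuous_apply a))
        ((continuous_apply a).comp (continuous_apply b))
  · refine isClosed_iInter fun v => isClosed_le continuous_const ?_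
    have hfe : (fun M : I → I → ℝ => dotProduct v ((Matrix.of M).mulVec v))
        = fun M => ∑ a, ∑ b, v a * v b * M a b :=
      funext fun M => dotProduct_expand _ _ _
    rw [hfe]
    exact continuous_finset_sum _ fun a _ => continuous_finset_sum _ fun b _ =>
      continuous_const.mul ((continuous_apply b).comp (continuous_apply a))

lemma s17C_closed (n m d : ℕ) (g : Fin m → MvPolynomial (Fin n) ℝ) :
    IsClosed (s17C n m d g) := by
  have he : s17C n m d g
      = (fun X : s17W n m d g => X.1) ⁻¹' {M | (Matrix.of M).PosSemidef}
        ∩ ⋂ i, (fun X : s17W n m d g => X.2 i) ⁻¹' {M | (Matrix.of M).PosSemidef} := by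
    ext X
    simp only [s17C, Set.mem_setOf_eq, Set.mem_inter_iff, Set.mem_preimage, Set.mem_iInter]
  rw [he]
  refine IsClosed.inter (s17_isClosed_psd_set.preimage continuous_fst) ?_
  exact isClosed_iInter fun i =>
    s17_isClosed_psd_set.preimage ((continuous_apply i).comp continuous_snd)

lemma s17C_smul (n m d : ℕ) (g : Fin m → MvPolynomial (Fin n) ℝ)
    {c : ℝ} (hc : 0 ≤ c) {X : s17W n m d g} (hX : X ∈ s17C n m d g) :
    c • X ∈ s17C n m d g := by
  refine ⟨?_, fun i => ?_⟩
  · exact s17_psd_smul hX.1 hc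
  · exact s17_psd_smul (hX.2 i) hc

lemma s17C_add (n m d : ℕ) (g : Fin m → MvPolynomial (Fin n) ℝ)
    {X Y : s17W n m d g} (hX : X ∈ s17C n m d g) (hY : Y ∈ s17C n m d g) :
    X + Y ∈ s17C n m d g := by
  refine ⟨?_, fun i => ?_⟩
  · exact Matrix.PosSemidef.add hX.1 hY.1
  · exact Matrix.PosSemidef.add (hX.2 i) (hY.2 i)

end Gram
lemma s17_sum_zero {ι : Type*} [Fintype ι] {a : ℝ} {b : ι → ℝ} (ha : 0 ≤ a)
    (hb : ∀ i, 0 ≤ b i) (h : a + ∑ i, b i = 0) : a = 0 ∧ ∀ i, b i = 0 := by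
  have hs : 0 ≤ ∑ i, b i := Finset.sum_nonneg fun i _ => hb i
  have ha0 : a = 0 := le_antisymm (by linarith) ha
  have hs0 : ∑ i, b i = 0 := by linarith
  exact ⟨ha0, fun i =>
    (Finset.sum_eq_zero_iff_of_nonneg fun i _ => hb i).1 hs0 i (Finset.mem_univ i)⟩

lemma s17_grams_zero {k : ℕ} {M : Matrix (MIdx n k) (MIdx n k) ℝ} (hM : M.PosSemidef)
    (h : grams k M = 0) : M = 0 := by
  obtain ⟨B, rfl⟩ := s17_psd_factor hM
  have h1 : (B.conjTranspose * B) = fun α β => ∑ j, B j α * B j β := by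
    funext α β
    rw [Matrix.mul_apply]
    exact Finset.sum_congr rfl fun j _ => by rw [Matrix.conjTranspose_apply]; simp
  rw [h1, grams_entry_sum (fun j α => B j α)] at h
  have hB0 : ∀ j α, B j α = 0 := by
    intro j α
    have hsj : polyAt k (fun a => B j a) = 0 := by
      apply MvPolynomial.funext; intro x
      have h0 := congrArg (MvPolynomial.eval x) h
      rw [map_sum, map_zero] at h0
      have h3 : ∀ jj ∈ Finset.univ,
          (0:ℝ) ≤ MvPolynomial.eval x ((polyAt k (fun a => B jj a)) ^ 2) := by
        intro jj _; rw [map_pow]; exact sq_nonneg _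
      have h4 := (Finset.sum_eq_zero_iff_of_nonneg h3).1 h0 j (Finset.mem_univ j)
      rw [map_pow] at h4
      have h6 : MvPolynomial.eval x (polyAt k fun a => B j a) = 0 := by
        have := sq_eq_zero_iff.1 h4
        simpa using this
      simpa using h6
    have hj := congrArg (fun p : MvPolynomial (Fin n) ℝ => p.coeff α.1) hsj
    simpa [polyAt_coeff (fun a => B j a) α] using hj
  refine Matrix.ext fun α β => ?_
  rw [Matrix.mul_apply, Matrix.zero_apply]
  exact Finset.sum_eq_zero fun j _ => by
    rw [Matrix.conjTranspose_apply, hB0 j α]; simp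

lemma s17_vecPoly_zero (d : ℕ) : vecPoly d (0 : MvPolynomial (Fin n) ℝ) = 0 :=
  funext fun α => by simp [vecPoly]

lemma s17_ker {m d : ℕ} (g : Fin m → MvPolynomial (Fin n) ℝ)
    (hgne : ∀ i, g i ≠ 0) (hg : ∀ i, (g i).totalDegree ≤ 2 * d)
    (K : Set (Fin n → ℝ)) (hK : K = {x | ∀ i, 0 ≤ MvPolynomial.eval x (g i)})
    (hKint : (interior K).Nonempty)
    {X : s17W n m d g} (hX : X ∈ s17C n m d g)
    (h0 : s17L n m d g X = 0) : X = 0 := by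
  have hvec : vecPoly d (gramPoly d g X) = vecPoly d 0 := by
    rw [s17_vecPoly_zero]; exact h0
  have hgp : gramPoly d g X = 0 :=
    s17_vecPoly_inj (gramPoly_totalDegree d g hg X) (by simp) hvec
  have hUK : interior K ⊆ K := interior_subset
  have hvanish : ∀ x ∈ interior K,
      (MvPolynomial.eval x (grams d (Matrix.of X.1)) = 0 ∧
        ∀ i, MvPolynomial.eval x
          (g i * grams (d - ((g i).totalDegree + 1) / 2) (Matrix.of (X.2 i))) = 0) := by
    intro x hx
    have hxK : ∀ i, 0 ≤ MvPolynomial.eval x (g i) := by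
      have hmem := hUK hx; rw [hK] at hmem; exact hmem
    have heval := congrArg (MvPolynomial.eval x) hgp
    rw [map_zero] at heval
    unfold gramPoly at heval
    rw [map_add, map_sum] at heval
    have ha : 0 ≤ MvPolynomial.eval x (grams d (Matrix.of X.1)) := by
      rw [grams_eval]; exact s17_psd_quad hX.1 _
    have hb : ∀ i, 0 ≤ MvPolynomial.eval x
        (g i * grams (d - ((g i).totalDegree + 1) / 2) (Matrix.of (X.2 i))) := by
      intro i
      rw [map_mul, grams_eval]
      exact mul_nonneg (hxK i) (s17_psd_quad (hX.2 i) _)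
    exact s17_sum_zero ha hb heval
  have hq0 : grams d (Matrix.of X.1) = 0 :=
    s17_vanish_open isOpen_interior hKint (fun x hx => (hvanish x hx).1)
  have hX1 : Matrix.of X.1 = 0 := s17_grams_zero hX.1 hq0
  have hXi : ∀ i, Matrix.of (X.2 i) = 0 := by
    intro i
    have hgi : g i * grams (d - ((g i).totalDegree + 1) / 2) (Matrix.of (X.2 i)) = 0 :=
      s17_vanish_open isOpen_interior hKint (fun x hx => (hvanish x hx).2 i)
    rcases mul_eq_zero.1 hgi with h | h
    · exact absurd h (hgne i)
    · exact s17_grams_zero (hX.2 i) h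
  exact Prod.ext hX1 (funext fun i => hXi i)

lemma s17_closed_image {W V : Type*} [NormedAddCommGroup W] [NormedSpace ℝ W]
    [FiniteDimensional ℝ W] [NormedAddCommGroup V] [NormedSpace ℝ V]
    (L : W →ₗ[ℝ] V) (C : Set W) (hCc : IsClosed C)
    (hCs : ∀ c : ℝ, 0 ≤ c → ∀ X ∈ C, c • X ∈ C)
    (hker : ∀ X ∈ C, L X = 0 → X = 0) : IsClosed (L '' C) := by
  haveI : ProperSpace W := FiniteDimensional.proper ℝ W
  have hLc : Continuous L := L.continuous_of_finiteDimensional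
  rcases (C ∩ Metric.sphere 0 1).eq_empty_or_nonempty with hS | hS
  · have hC0 : C ⊆ {0} := by
      intro X hX
      by_contra hne
      have hn : ‖X‖ ≠ 0 := by simpa using hne
      have hmem : (‖X‖⁻¹ • X) ∈ C ∩ Metric.sphere 0 1 := by
        refine ⟨hCs _ (by positivity) X hX, ?_⟩
        rw [mem_sphere_zero_iff_norm, norm_smul, norm_inv, norm_norm, inv_mul_cancel₀ hn]
      rw [hS] at hmem
      exact (Set.notMem_empty _) hmem
    have himg : L '' C ⊆ {0} := by
      rintro _ ⟨X, hX, rfl⟩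
      have hX0 : X = 0 := hC0 hX
      rw [hX0]
      simp
    exact (Set.Finite.subset (Set.finite_singleton 0) himg).isClosed
  · have hcomp : IsCompact (C ∩ Metric.sphere 0 1) :=
      IsCompact.of_isClosed_subset (isCompact_sphere 0 1)
        (hCc.inter Metric.isClosed_sphere) Set.inter_subset_right
    obtain ⟨X0, hX0mem, hX0min⟩ := hcomp.exists_isMinOn hS (hLc.norm.continuousOn)
    set m0 := ‖L X0‖ with hm0e
    have hX0n : ‖X0‖ = 1 := mem_sphere_zero_iff_norm.1 hX0mem.2
    have hm0 : 0 < m0 := by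
      rcases (norm_nonneg (L X0)).eq_or_lt with h | h
      · exfalso
        have hL0 : L X0 = 0 := norm_eq_zero.1 h.symm
        have := hker X0 hX0mem.1 hL0
        rw [this] at hX0n
        simp at hX0n
      · exact h
    have hbound : ∀ X ∈ C, m0 * ‖X‖ ≤ ‖L X‖ := by
      intro X hX
      rcases eq_or_ne X 0 with rfl | hne
      · simp
      · have hn : ‖X‖ ≠ 0 := by simpa using hne
        have hpos : (0:ℝ) < ‖X‖ := lt_of_le_of_ne (norm_nonneg X) (Ne.symm hn)
        have hmem : (‖X‖⁻¹ • X) ∈ C ∩ Metric.sphere 0 1 := by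
          refine ⟨hCs _ (by positivity) X hX, ?_⟩
          rw [mem_sphere_zero_iff_norm, norm_smul, norm_inv, norm_norm, inv_mul_cancel₀ hn]
        have h2 := isMinOn_iff.1 hX0min _ hmem
        rw [map_smul, norm_smul, norm_inv, norm_norm] at h2
        calc m0 * ‖X‖ ≤ (‖X‖⁻¹ * ‖L X‖) * ‖X‖ := by nlinarith
          _ = ‖L X‖ := by field_simp
    refine IsSeqClosed.isClosed ?_
    intro u z hu huz
    choose Xs hXsC hXsL using fun k => hu k
    obtain ⟨Mu, hMu⟩ : ∃ Mu : ℝ, ∀ k, ‖u k‖ ≤ Mu := by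
      obtain ⟨Mu, hMu⟩ := huz.norm.bddAbove_range
      exact ⟨Mu, fun k => hMu (Set.mem_range_self k)⟩
    set R := m0⁻¹ * Mu with hR
    have hball : ∀ k, Xs k ∈ Metric.closedBall (0:W) R ∩ C := by
      intro k
      refine ⟨?_, hXsC k⟩
      rw [Metric.mem_closedBall, dist_zero_right]
      have h1 := hbound _ (hXsC k)
      rw [hXsL k] at h1
      have h2 := hMu k
      rw [hR, ← mul_le_mul_iff_right₀ hm0, ← mul_assoc, mul_inv_cancel₀ (ne_of_gt hm0), one_mul]
      linarith
    have hcomp2 : IsCompact (Metric.closedBall (0:W) R ∩ C) :=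
      (isCompact_closedBall _ _).inter_right hCc
    obtain ⟨Xl, hXl, φ, hφ, hconv⟩ := hcomp2.tendsto_subseq hball
    refine ⟨Xl, hXl.2, ?_⟩
    have h1 : Filter.Tendsto (fun k => L (Xs (φ k))) Filter.atTop (nhds (L Xl)) :=
      (hLc.tendsto Xl).comp hconv
    have h2 : Filter.Tendsto (fun k => L (Xs (φ k))) Filter.atTop (nhds z) := by
      have he : (fun k => L (Xs (φ k))) = fun k => u (φ k) := funext fun k => hXsL (φ k)
      rw [he]
      exact huz.comp hφ.tendsto_atTop
    exact tendsto_nhds_unique h1 h2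
lemma tmsNorm_zero {k : ℕ} : tmsNorm (0 : MIdx n k → ℝ) = 0 := by
  unfold tmsNorm; simp

lemma riesz_smul_y {d : ℕ} (f : MvPolynomial (Fin n) ℝ) (c : ℝ) (y : MIdx n (2 * d) → ℝ) :
    riesz d f (c • y) = c * riesz d f y := by
  unfold riesz
  rw [Finset.mul_sum]
  exact Finset.sum_congr rfl fun α _ => by
    simp only [Pi.smul_apply, smul_eq_mul]; ring

lemma riesz_neg_y {d : ℕ} (f : MvPolynomial (Fin n) ℝ) (y : MIdx n (2 * d) → ℝ) :
    riesz d f (-y) = -riesz d f y := by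
  unfold riesz
  rw [← Finset.sum_neg_distrib]
  exact Finset.sum_congr rfl fun α _ => by simp

lemma momMat_smul {d : ℕ} (c : ℝ) (y : MIdx n (2 * d) → ℝ) :
    momMat d (c • y) = c • momMat d y := rfl

lemma Yext_smul {d : ℕ} (c : ℝ) (y : MIdx n (2 * d) → ℝ) (σ : Fin n →₀ ℕ) :
    Yext (c • y) σ = c * Yext y σ := by
  unfold Yext
  split <;> simp

lemma locMat_smul {d : ℕ} (p : MvPolynomial (Fin n) ℝ) (hp : p.totalDegree ≤ 2 * d)
    (c : ℝ) (y : MIdx n (2 * d) → ℝ) :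
    locMat d p hp (c • y) = c • locMat d p hp y := by
  funext α β
  rw [Matrix.smul_apply, locMat_apply, locMat_apply, smul_eq_mul, Finset.mul_sum]
  exact Finset.sum_congr rfl fun γ _ => by rw [Yext_smul]; ring

lemma s17_psd_zero {I : Type*} [Fintype I] : (0 : Matrix I I ℝ).PosSemidef := by
  refine s17_psd_of (fun a b => rfl) fun v => ?_
  rw [Matrix.zero_mulVec, dotProduct_zero]

lemma memQ_one {m d : ℕ} {g : Fin m → MvPolynomial (Fin n) ℝ} :
    memQ d g (1 : MvPolynomial (Fin n) ℝ) := by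
  refine ⟨1, fun _ => 0, ⟨1, fun _ => 1, fun j => by simp, by simp⟩,
    fun _ => IsSOSDeg_zero, by simp⟩

lemma s17_weak {m d : ℕ} (g : Fin m → MvPolynomial (Fin n) ℝ)
    (hg : ∀ i, (g i).totalDegree ≤ 2 * d) (f : MvPolynomial (Fin n) ℝ) {ε : ℝ}
    (hε : 0 ≤ ε) (y : MIdx n (2 * d) → ℝ)
    (hy0 : y ⟨0, by simp⟩ = 1) (hmom : (momMat d y).PosSemidef)
    (hloc : ∀ i, (locMat d (g i) (hg i) y).PosSemidef)
    (γ : ℝ) (p : MvPolynomial (Fin n) ℝ)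
    (hp : tmsNorm (vecPoly d p) ≤ ε)
    (hq : memQ d g (f - p - MvPolynomial.C γ)) :
    γ ≤ riesz d f y + ε * tmsNorm y := by
  have h1 : 0 ≤ riesz d (f - p - MvPolynomial.C γ) y :=
    memQ_riesz_nonneg hg y hmom hloc hq
  rw [riesz_sub, riesz_sub, riesz_C] at h1
  simp only [hy0, mul_one] at h1
  have h2 := riesz_ge_CS p y
  have h3 : tmsNorm (vecPoly d p) * tmsNorm y ≤ ε * tmsNorm y :=
    mul_le_mul_of_nonneg_right hp (tmsNorm_nonneg y)
  linarith

lemma s17_dual {m d : ℕ} (g : Fin m → MvPolynomial (Fin n) ℝ)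
    (hgne : ∀ i, g i ≠ 0) (hg : ∀ i, (g i).totalDegree ≤ 2 * d)
    (K : Set (Fin n → ℝ)) (hK : K = {x | ∀ i, 0 ≤ MvPolynomial.eval x (g i)})
    (hKint : (interior K).Nonempty)
    (f θ : MvPolynomial (Fin n) ℝ) (hf : f.totalDegree ≤ 2 * d)
    (hθ : θ = ∑ α : MIdx n d, MvPolynomial.monomial (α.1 + α.1) (1 : ℝ))
    (ε : ℝ) (hε : tmsNorm (vecPoly d (f - θ)) < ε)
    (vstar : ℝ)
    (hopt : ∀ y : MIdx n (2 * d) → ℝ,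
      y ⟨0, by simp⟩ = 1 → (momMat d y).PosSemidef →
      (∀ i, (locMat d (g i) (hg i) y).PosSemidef) →
      vstar ≤ riesz d f y + ε * tmsNorm y) :
    ∃ p : MvPolynomial (Fin n) ℝ, p.totalDegree ≤ 2 * d ∧
      tmsNorm (vecPoly d p) ≤ ε ∧ memQ d g (f - p - MvPolynomial.C vstar) := by
  classical
  have hε0 : 0 < ε := lt_of_le_of_lt (tmsNorm_nonneg _) hε
  set QV : Set (MIdx n (2 * d) → ℝ) := s17L n m d g '' s17C n m d g with hQVdef
  set Bε : Set (MIdx n (2 * d) → ℝ) := {w | tmsNorm w ≤ ε} with hBdef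
  set D := QV + Bε with hDdef
  have hC0 : (0 : s17W n m d g) ∈ s17C n m d g := ⟨s17_psd_zero, fun i => s17_psd_zero⟩
  have hQV0 : (0 : MIdx n (2 * d) → ℝ) ∈ QV := ⟨0, hC0, map_zero _⟩
  have hB0 : (0 : MIdx n (2 * d) → ℝ) ∈ Bε := by
    show tmsNorm (0 : MIdx n (2 * d) → ℝ) ≤ ε
    rw [tmsNorm_zero]; exact hε0.le
  have hQVconv : Convex ℝ QV := by
    have hCconv : Convex ℝ (s17C n m d g) := by
      intro X hX Y hY a b ha hb _
      exact s17C_add n m d g (s17C_smul n m d g ha hX) (s17C_smul n m d g hb hY)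
    exact hCconv.linear_image (s17L n m d g)
  have hBconv : Convex ℝ Bε := by
    intro v hv w hw a b ha hb hab
    have h1 : tmsNorm (a • v + b • w) ≤ tmsNorm (a • v) + tmsNorm (b • w) :=
      tmsNorm_triangle _ _
    rw [tmsNorm_smul ha, tmsNorm_smul hb] at h1
    have hv' : tmsNorm v ≤ ε := hv
    have hw' : tmsNorm w ≤ ε := hw
    show tmsNorm (a • v + b • w) ≤ ε
    nlinarith [tmsNorm_nonneg v, tmsNorm_nonneg w]
  have hDconv : Convex ℝ D := hQVconv.add hBconv
  have hQVclosed : IsClosed QV :=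
    s17_closed_image _ _ (s17C_closed n m d g)
      (fun c hc X hX => s17C_smul n m d g hc hX)
      (fun X hX h => s17_ker g hgne hg K hK hKint hX h)
  have hDclosed : IsClosed D :=
    hQVclosed.add_right_of_isCompact (s17_compact_tmsBall ε)
  have hmem : vecPoly d (f - MvPolynomial.C vstar) ∈ D := by
    by_contra hnot
    obtain ⟨Φ, u, hub, hlt⟩ := geometric_hahn_banach_closed_point hDconv hDclosed hnot
    set wv : MIdx n (2 * d) → ℝ := fun α => Φ (fun β => if α = β then 1 else 0) with hwv
    have hΦ : ∀ v : MIdx n (2 * d) → ℝ, Φ v = ∑ α, v α * wv α := by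
      intro v
      conv_lhs => rw [pi_eq_sum_univ v]
      rw [map_sum]
      exact Finset.sum_congr rfl fun α _ => by rw [map_smul, smul_eq_mul]
    have hu0 : 0 < u := by
      have h := hub 0 (by simpa using Set.add_mem_add hQV0 hB0)
      rwa [map_zero] at h
    have hQle : ∀ X ∈ s17C n m d g, Φ (s17L n m d g X) ≤ 0 := by
      intro X hX
      by_contra hpos
      push_neg at hpos
      set t := Φ (s17L n m d g X) with ht
      have htne : t ≠ 0 := ne_of_gt hpos
      have hc : (0 : ℝ) ≤ 2 * u / t := by positivity
      have hmem2 : (2 * u / t) • s17L n m d g X + 0 ∈ D := by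
        refine Set.add_mem_add ?_ hB0
        exact ⟨(2 * u / t) • X, s17C_smul n m d g hc hX, map_smul _ _ _⟩
      rw [add_zero] at hmem2
      have h4 := hub _ hmem2
      rw [map_smul, smul_eq_mul, ← ht, div_mul_cancel₀ _ htne] at h4
      linarith
    have hball : ε * tmsNorm wv < u := by
      rcases eq_or_ne (tmsNorm wv) 0 with hzz | hzz
      · rw [hzz, mul_zero]; exact hu0
      · have hpos : 0 < tmsNorm wv := lt_of_le_of_ne (tmsNorm_nonneg wv) (Ne.symm hzz)
        set v := (ε / tmsNorm wv) • wv with hvdef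
        have hvB : v ∈ Bε := by
          show tmsNorm v ≤ ε
          rw [hvdef, tmsNorm_smul (by positivity), div_mul_cancel₀ _ hzz]
        have hmem3 : (0 : MIdx n (2 * d) → ℝ) + v ∈ D := Set.add_mem_add hQV0 hvB
        rw [zero_add] at hmem3
        have h5 := hub v hmem3
        rw [hΦ v] at h5
        have h6 : ∑ α, v α * wv α = ε * tmsNorm wv := by
          have h7 : ∑ α, v α * wv α = (ε / tmsNorm wv) * ∑ α, wv α * wv α := by
            rw [Finset.mul_sum]
            exact Finset.sum_congr rfl fun α _ => by
              rw [hvdef]; simp only [Pi.smul_apply, smul_eq_mul]; ring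
          have h8 : ∑ α, wv α * wv α = tmsNorm wv * tmsNorm wv := by
            have := tmsNorm_sq wv
            have h9 : ∑ α, wv α * wv α = ∑ α, wv α ^ 2 :=
              Finset.sum_congr rfl fun α _ => (pow_two _).symm
            rw [h9, ← this]; ring
          rw [h7, h8]
          field_simp
        rw [h6] at h5
        exact h5
    set z : MIdx n (2 * d) → ℝ := -wv with hzdef
    have hrznn : ∀ q, memQ d g q → 0 ≤ riesz d q z := by
      intro q hq
      obtain ⟨X, hX, hXq⟩ := memQ_gramPoly d g hq
      have h7 : Φ (vecPoly d q) ≤ 0 := by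
        rw [← hXq]
        exact hQle X hX
      rw [hΦ] at h7
      have h8 : riesz d q z = -∑ α, vecPoly d q α * wv α := by
        rw [riesz_eq_dot, ← Finset.sum_neg_distrib]
        exact Finset.sum_congr rfl fun α _ => by
          rw [hzdef]; simp only [Pi.neg_apply]; ring
      rw [h8]
      linarith
    have hmomz : (momMat d z).PosSemidef := by
      refine s17_psd_of (fun a b => momMat_symm z a b) fun v => ?_
      have h9 := hrznn _ (memQ_sq (g := g) (polyAt_totalDegree (k := d) v))
      rw [riesz_sq (polyAt_totalDegree v)] at h9
      have h10 : (fun α : MIdx n d => (polyAt d v).coeff α.1) = v :=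
        funext fun α => polyAt_coeff v α
      rwa [h10] at h9
    have hlocz : ∀ i, (locMat d (g i) (hg i) z).PosSemidef := by
      intro i
      refine s17_psd_of (fun a b => locMat_symm _ _ z a b) fun v => ?_
      have h9 := hrznn _ (memQ_gsq i (polyAt_totalDegree v))
      rw [riesz_g_sq (g i) (hg i) (polyAt_totalDegree v)] at h9
      have h10 : (fun α => (polyAt (d - ((g i).totalDegree + 1) / 2) v).coeff α.1) = v :=
        funext fun α => polyAt_coeff v α
      rwa [h10] at h9
    have hz0 : 0 ≤ z ⟨0, by simp⟩ := by
      have h11 := hrznn 1 memQ_one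
      have h12 : riesz d (1 : MvPolynomial (Fin n) ℝ) z = z ⟨0, by simp⟩ := by
        have h13 : (1 : MvPolynomial (Fin n) ℝ) = MvPolynomial.C 1 := rfl
        rw [h13, riesz_C, one_mul]
      rwa [h12] at h11
    have hkey : riesz d f z + ε * tmsNorm z < vstar * z ⟨0, by simp⟩ := by
      have htar : Φ (vecPoly d (f - MvPolynomial.C vstar))
          = riesz d (f - MvPolynomial.C vstar) wv := by
        rw [hΦ]
        exact (riesz_eq_dot _ _).symm
      have h12 : Φ (vecPoly d (f - MvPolynomial.C vstar))
          = -(riesz d f z) + vstar * z ⟨0, by simp⟩ := by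
        rw [htar, riesz_sub, riesz_C]
        have hfz : riesz d f wv = -riesz d f z := by
          rw [hzdef, riesz_neg_y, neg_neg]
        have hwz : wv ⟨0, by simp⟩ = -(z ⟨0, by simp⟩) := by
          rw [hzdef]; simp
        rw [hfz, hwz]
        ring
      have h13 : tmsNorm z = tmsNorm wv := by rw [hzdef, tmsNorm_neg]
      have h14 := hlt
      rw [h12] at h14
      rw [h13]
      linarith
    rcases hz0.eq_or_lt with hz0e | hz0p
    · have h15 := s17_coercive (f := f) hθ ε z hmomz
      have h16 : 0 ≤ riesz d f z + ε * tmsNorm z :=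
        le_trans (mul_nonneg (by linarith) (tmsNorm_nonneg z)) h15
      rw [← hz0e, mul_zero] at hkey
      linarith
    · set z0 := z ⟨0, by simp⟩ with hz0def
      set zh := z0⁻¹ • z with hzhdef
      have hzh0 : zh ⟨0, by simp⟩ = 1 := by
        show z0⁻¹ * z0 = 1
        exact inv_mul_cancel₀ (ne_of_gt hz0p)
      have hmzh : (momMat d zh).PosSemidef := by
        rw [hzhdef, momMat_smul]
        exact s17_psd_smul hmomz (inv_nonneg.2 hz0p.le)
      have hlzh : ∀ i, (locMat d (g i) (hg i) zh).PosSemidef := by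
        intro i
        rw [hzhdef, locMat_smul]
        exact s17_psd_smul (hlocz i) (inv_nonneg.2 hz0p.le)
      have h17 := hopt zh hzh0 hmzh hlzh
      have h18 : riesz d f zh + ε * tmsNorm zh
          = z0⁻¹ * (riesz d f z + ε * tmsNorm z) := by
        rw [hzhdef, riesz_smul_y, tmsNorm_smul (inv_nonneg.2 hz0p.le)]
        ring
      rw [h18] at h17
      have h19 : vstar * z0 ≤ riesz d f z + ε * tmsNorm z := by
        have h20 := mul_le_mul_of_nonneg_left h17 hz0p.le
        rw [← mul_assoc, mul_inv_cancel₀ (ne_of_gt hz0p), one_mul] at h20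
        linarith [h20]
      linarith
  obtain ⟨qv, hqv, w, hwB, hsum⟩ := Set.mem_add.1 hmem
  obtain ⟨X, hXC, hXL⟩ := hqv
  set q := gramPoly d g X with hqdef
  set p := polyAt (2 * d) w with hpdef
  have hvp : vecPoly d p = w := funext fun α => polyAt_coeff w α
  have hpd : p.totalDegree ≤ 2 * d := polyAt_totalDegree w
  have hdegfc : (f - MvPolynomial.C vstar).totalDegree ≤ 2 * d := by
    refine le_trans (MvPolynomial.totalDegree_sub _ _) (max_le hf ?_)
    rw [MvPolynomial.totalDegree_C]
    omega
  have hdegqp : (q + p).totalDegree ≤ 2 * d :=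
    le_trans (MvPolynomial.totalDegree_add _ _)
      (max_le (gramPoly_totalDegree d g hg X) hpd)
  have heq : f - MvPolynomial.C vstar = q + p := by
    apply s17_vecPoly_inj hdegfc hdegqp
    rw [vecPoly_add', hvp]
    have hq1 : vecPoly d q = qv := hXL
    rw [hq1]
    exact hsum.symm
  refine ⟨p, hpd, by rw [hvp]; exact hwB, ?_⟩
  have hfin : f - p - MvPolynomial.C vstar = q := by
    rw [sub_sub, add_comm p (MvPolynomial.C vstar), ← sub_sub, heq]
    ring
  rw [hfin]
  exact gramPoly_memQ d g hXC
end S17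

/-- (Theorem 2.) Let `g₁,…,g_m` be nonzero polynomials of degree ≤ 2d
with `K = {x : g₁(x) ≥ 0,…,g_m(x) ≥ 0}` having nonempty interior, and let
`deg f ≤ 2d`. If `ε > ‖vec(f − θ_d)‖` where `θ_d = Σ_{α ∈ ℕⁿ_d} x^{2α}`, then the moment
relaxation (minimize `⟨f,y⟩ + ε‖y‖` over feasible tms `y`) attains its infimum, the dual
SOS program (maximize `γ` subject to `‖vec(p)‖ ≤ ε`, `p ∈ ℝ[x]_{2d}`,
`f − p − γ ∈ Q(g)_{2d}`) attains its supremum, and the two optimal values are equal. -/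
theorem stmt17 (n m d : ℕ) (g : Fin m → MvPolynomial (Fin n) ℝ)
    (hgne : ∀ i, g i ≠ 0) (hg : ∀ i, (g i).totalDegree ≤ 2 * d)
    (K : Set (Fin n → ℝ)) (hK : K = {x | ∀ i, 0 ≤ MvPolynomial.eval x (g i)})
    (hKint : (interior K).Nonempty)
    (f : MvPolynomial (Fin n) ℝ) (hf : f.totalDegree ≤ 2 * d)
    (θ : MvPolynomial (Fin n) ℝ)
    (hθ : θ = ∑ α : MIdx n d, MvPolynomial.monomial (α.1 + α.1) (1 : ℝ))
    (ε : ℝ) (hε : tmsNorm (vecPoly d (f - θ)) < ε) :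
    ∃ (ystar : MIdx n (2 * d) → ℝ) (γstar : ℝ) (pstar : MvPolynomial (Fin n) ℝ),
      -- (i) the moment relaxation attains its infimum at `ystar`
      (ystar ⟨0, by simp⟩ = 1 ∧ (momMat d ystar).PosSemidef ∧
        ∀ i, (locMat d (g i) (hg i) ystar).PosSemidef) ∧
      (∀ y : MIdx n (2 * d) → ℝ,
        y ⟨0, by simp⟩ = 1 → (momMat d y).PosSemidef →
        (∀ i, (locMat d (g i) (hg i) y).PosSemidef) →
        riesz d f ystar + ε * tmsNorm ystar ≤ riesz d f y + ε * tmsNorm y) ∧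
      -- (ii) the dual SOS program attains its supremum at `(γstar, pstar)`
      (pstar.totalDegree ≤ 2 * d ∧ tmsNorm (vecPoly d pstar) ≤ ε ∧
        memQ d g (f - pstar - MvPolynomial.C γstar)) ∧
      (∀ (γ : ℝ) (p : MvPolynomial (Fin n) ℝ), p.totalDegree ≤ 2 * d →
        tmsNorm (vecPoly d p) ≤ ε → memQ d g (f - p - MvPolynomial.C γ) →
        γ ≤ γstar) ∧
      -- (iii) the two optimal values are equal
      riesz d f ystar + ε * tmsNorm ystar = γstar := by
  obtain ⟨x0, hx0U⟩ := id hKint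
  have hx0K : x0 ∈ K := interior_subset hx0U
  have hx0 : ∀ i, 0 ≤ MvPolynomial.eval x0 (g i) := by rw [hK] at hx0K; exact hx0K
  obtain ⟨ystar, hfeas, hopt⟩ := s17_primal g hg f θ hθ ε hε x0 hx0
  obtain ⟨pstar, hpd, hpn, hpQ⟩ := s17_dual g hgne hg K hK hKint f θ hf hθ ε hε
      (riesz d f ystar + ε * tmsNorm ystar) hopt
  have hε0 : 0 ≤ ε := le_trans (tmsNorm_nonneg _) hε.le
  refine ⟨ystar, riesz d f ystar + ε * tmsNorm ystar, pstar, hfeas, hopt,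
    ⟨hpd, hpn, hpQ⟩, ?_, rfl⟩
  intro γ p hdeg hpn' hq
  exact s17_weak g hg f hε0 ystar hfeas.1 hfeas.2.1 hfeas.2.2 γ p hpn' hq
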